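/- If G is a graph with an odd number of vertices (at least 3) and v is a vertex of minimum degree, then mp(G) ≤ δ(G) + δ(G − v). -/
import Mathlib

open SimpleGraph

/-- An almost-perfect matching: a matching covering all vertices except exactly one. -/
def SimpleGraph.Subgraph.IsAlmostPerfectMatching {V : Type*} {G : SimpleGraph V}
    (M : G.Subgraph) : Prop :=
  M.IsMatching ∧ ∃ v : V, M.verts = {v}ᶜ

/-- `G` has a perfect matching or an almost-perfect matching. -/
def SimpleGraph.HasGoodMatching {V : Type*} (G : SimpleGraph V) : Prop :=
  (∃ M : G.Subgraph, M.IsPerfectMatching) ∨ (∃ M : G.Subgraph, M.IsAlmostPerfectMatching)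

/-- The matching preclusion number of `G`. -/
noncomputable def SimpleGraph.mp {V : Type*} [Fintype V] (G : SimpleGraph V) : ℕ :=
  sInf { k | ∃ F : Finset (Sym2 V), ↑F ⊆ G.edgeSet ∧ F.card = k ∧
    ¬ (G.deleteEdges ↑F).HasGoodMatching }

theorem stmt4 {V : Type*} [Fintype V] [DecidableEq V] (G : SimpleGraph V)
    [DecidableRel G.Adj] (hodd : Odd (Fintype.card V)) (h3 : 3 ≤ Fintype.card V)
    (v : V) (hv : G.degree v = G.minDegree) :
    G.mp ≤ G.minDegree + (G.induce ({v}ᶜ : Set V)).minDegree := by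
  classical
  set s : Set V := ({v}ᶜ : Set V) with hs
  have hsne : Nonempty s := by
    obtain ⟨w, hw⟩ := Fintype.exists_ne_of_one_lt_card (by omega) v
    exact ⟨⟨w, by simp [hs, hw]⟩⟩
  obtain ⟨u, hu⟩ := (G.induce s).exists_minimal_degree_vertex
  have huv : (u : V) ≠ v := u.2
  set A := G.incidenceFinset v with hA
  set B := G.incidenceFinset (u : V) with hB
  set F := A ∪ B with hF
  have hFsub : (↑F : Set (Sym2 V)) ⊆ G.edgeSet := by
    intro e he
    simp only [hF, hA, hB, Finset.coe_union, Set.mem_union, Finset.mem_coe,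
      mem_incidenceFinset] at he
    rcases he with h | h
    · exact G.incidenceSet_subset v h
    · exact G.incidenceSet_subset _ h
  -- degree computation in the induced graph
  set N := G.neighborFinset (u : V) with hN
  have himg : ((G.induce s).neighborFinset u).image (Subtype.val) = N.erase v := by
    ext w
    simp only [Finset.mem_image, mem_neighborFinset, Finset.mem_erase, hN]
    constructor
    · rintro ⟨a, ha, rfl⟩
      exact ⟨a.2, by simpa using ha⟩
    · rintro ⟨hwv, hadj⟩
      exact ⟨⟨w, by simp [hs, hwv]⟩, by simpa using hadj, rfl⟩
  have hdegind : (G.induce s).degree u = (N.erase v).card := by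
    rw [← himg, Finset.card_image_of_injective _ Subtype.val_injective, ← card_neighborFinset_eq_degree]
  have h2 : B.card ≤ (G.induce s).degree u + (A ∩ B).card := by
    have hBN : B.card = N.card := by
      rw [hB, hN, card_incidenceFinset_eq_degree, card_neighborFinset_eq_degree]
    by_cases hadj : G.Adj (u : V) v
    · have hvN : v ∈ N := by simp [hN, mem_neighborFinset, hadj]
      have h1 : (N.erase v).card + 1 = N.card := Finset.card_erase_add_one hvN
      have hmem : s((u : V), v) ∈ A ∩ B := by
        rw [Finset.mem_inter, hA, hB, mem_incidenceFinset, mem_incidenceFinset]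
        exact ⟨G.mk'_mem_incidenceSet_right_iff.2 hadj, G.mk'_mem_incidenceSet_left_iff.2 hadj⟩
      have : 1 ≤ (A ∩ B).card := Finset.card_pos.2 ⟨_, hmem⟩
      omega
    · have hvN : v ∉ N := by simp [hN, mem_neighborFinset, hadj]
      rw [hBN, ← Finset.erase_eq_of_notMem hvN, ← hdegind]
      omega
  have hcard : F.card ≤ G.degree v + (G.induce s).degree u := by
    have h1 := Finset.card_union_add_card_inter A B
    have hAd : A.card = G.degree v := by rw [hA, card_incidenceFinset_eq_degree]
    have hFc : F.card = (A ∪ B).card := rfl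
    omega
  -- the deleted graph has no good matching
  set G' := G.deleteEdges (↑F : Set (Sym2 V)) with hG'
  have hviso : ∀ w, ¬ G'.Adj v w := by
    intro w hw
    rw [hG', deleteEdges_adj] at hw
    exact hw.2 (by
      simp only [hF, Finset.coe_union, Set.mem_union, Finset.mem_coe, hA, mem_incidenceFinset]
      exact Or.inl (G.mk'_mem_incidenceSet_left_iff.2 hw.1))
  have huiso : ∀ w, ¬ G'.Adj (u : V) w := by
    intro w hw
    rw [hG', deleteEdges_adj] at hw
    exact hw.2 (by
      simp only [hF, Finset.coe_union, Set.mem_union, Finset.mem_coe, hB, mem_incidenceFinset]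
      exact Or.inr (G.mk'_mem_incidenceSet_left_iff.2 hw.1))
  have hno : ¬ G'.HasGoodMatching := by
    rintro (⟨M, hm, hsp⟩ | ⟨M, hm, x, hx⟩)
    · obtain ⟨w, hw, -⟩ := hm (hsp v)
      exact hviso w (M.adj_sub hw)
    · by_cases hxv : x = v
      · have hmem : (u : V) ∈ M.verts := by
          rw [hx, hxv]; exact huv
        obtain ⟨w, hw, -⟩ := hm hmem
        exact huiso w (M.adj_sub hw)
      · have hmem : v ∈ M.verts := by
          rw [hx]; exact fun h => hxv (h.symm)
        obtain ⟨w, hw, -⟩ := hm hmem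
        exact hviso w (M.adj_sub hw)
  have hmp : G.mp ≤ F.card := Nat.sInf_le ⟨F, hFsub, rfl, hno⟩
  calc G.mp ≤ F.card := hmp
    _ ≤ G.degree v + (G.induce s).degree u := hcard
    _ = G.minDegree + (G.induce s).degree u := by rw [hv]
    _ ≤ G.minDegree + (G.induce s).minDegree := by rw [← hu]
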